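/- Let f̃ : K × K → ℝ be such that for each fixed z, f̃(·; z) is μ̃-strongly convex and differentiable with ∇₁f̃(z; z) = ∇f(z), where f is differentiable. Fix x ∈ K and y ∈ ℝⁿ, and let x̃ = argmin_{w ∈ K} [ f̃(w; x) + (y − ∇f(x))ᵀ(w − x) + G(w) ] for a convex function G. Then −(x̃ − x)ᵀ y + G(x) − G(x̃) ≥ μ̃‖x̃ − x‖². -/

import Mathlib

open scoped RealInnerProductSpace
open Filter Topology

/-- First-order lower bound for strongly convex functions. -/
lemma strong_grad_lb {E : Type*} [NormedAddCommGroup E] [InnerProductSpace ℝ E] [CompleteSpace E]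
    {s : Set E} {m : ℝ} {g : E → ℝ} {g' a b : E}
    (hs : StrongConvexOn s m g) (ha : a ∈ s) (hb : b ∈ s)
    (hg : HasGradientAt g g' a) :
    g a + ⟪g', b - a⟫ + m / 2 * ‖b - a‖ ^ 2 ≤ g b := by
  set φ : ℝ → ℝ := fun t => g (a + t • (b - a)) with hφ
  have hc : ∀ t : ℝ, HasDerivAt (fun t : ℝ => a + t • (b - a)) (b - a) t := by
    intro t
    simpa using ((hasDerivAt_id t).smul_const (b - a)).const_add a
  have hder : HasDerivAt φ ⟪g', b - a⟫ 0 := by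
    have hF := hg.hasFDerivAt
    rw [show a = a + (0:ℝ) • (b - a) by simp] at hF
    have := hF.comp_hasDerivAt (x := (0:ℝ)) (f := fun t : ℝ => a + t • (b - a))
      (by simpa using hc 0)
    exact this
  have hslope : Tendsto (fun t : ℝ => (φ t - φ 0) / t) (𝓝[>] (0:ℝ)) (𝓝 ⟪g', b - a⟫) := by
    have := hasDerivAt_iff_tendsto_slope.mp hder
    have h2 := this.mono_left (nhdsWithin_mono _ (fun t ht => ne_of_gt ht))
    refine h2.congr fun t => ?_
    simp [slope_def_field]
  have hRHS : Tendsto (fun t : ℝ => g b - g a - (1 - t) * (m / 2 * ‖a - b‖ ^ 2))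
      (𝓝[>] (0:ℝ)) (𝓝 (g b - g a - m / 2 * ‖a - b‖ ^ 2)) := by
    have : ContinuousAt (fun t : ℝ => g b - g a - (1 - t) * (m / 2 * ‖a - b‖ ^ 2)) 0 := by
      fun_prop
    simpa using this.continuousWithinAt.tendsto
  have key : ⟪g', b - a⟫ ≤ g b - g a - m / 2 * ‖a - b‖ ^ 2 := by
    refine le_of_tendsto_of_tendsto hslope hRHS ?_
    filter_upwards [Ioo_mem_nhdsGT_of_mem (by norm_num : (0:ℝ) ∈ Set.Ico 0 1)] with t ht
    obtain ⟨ht0, ht1⟩ := ht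
    have hcomb := hs.2 ha hb (by linarith : (0:ℝ) ≤ 1 - t) ht0.le (by ring)
    have heq : (1 - t) • a + t • b = a + t • (b - a) := by
      module
    rw [heq] at hcomb
    have : φ t ≤ (1 - t) * g a + t * g b - (1 - t) * t * (m / 2 * ‖a - b‖ ^ 2) := by
      simpa [hφ, smul_eq_mul] using hcomb
    have hφ0 : φ 0 = g a := by simp [hφ]
    rw [div_le_iff₀ ht0, hφ0]
    nlinarith
  have hnorm : ‖a - b‖ = ‖b - a‖ := norm_sub_rev a b
  rw [hnorm] at key
  linarith

/-- the minimizer `x̃` of the strongly convex SCA subproblem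
satisfies the strong-monotonicity inequality
`-(x̃ - x)ᵀ y + G x - G x̃ ≥ μ̃ ‖x̃ - x‖²`. -/
theorem stmt_1 {n : ℕ}
    (K : Set (EuclideanSpace ℝ (Fin n))) (hKne : K.Nonempty) (hKcl : IsClosed K)
    (hKconv : Convex ℝ K)
    (G : EuclideanSpace ℝ (Fin n) → ℝ) (hG : ConvexOn ℝ K G)
    (f : EuclideanSpace ℝ (Fin n) → ℝ)
    (fgrad : EuclideanSpace ℝ (Fin n) → EuclideanSpace ℝ (Fin n))
    (hf : ∀ z ∈ K, HasGradientAt f (fgrad z) z)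
    (ft : EuclideanSpace ℝ (Fin n) → EuclideanSpace ℝ (Fin n) → ℝ)
    (ftgrad : EuclideanSpace ℝ (Fin n) → EuclideanSpace ℝ (Fin n) →
      EuclideanSpace ℝ (Fin n))
    (μ : ℝ) (hμ : 0 < μ)
    (hstrong : ∀ z ∈ K, StrongConvexOn K μ (fun w => ft w z))
    (hftgrad : ∀ z ∈ K, ∀ w, HasGradientAt (fun w' => ft w' z) (ftgrad w z) w)
    (hconsistent : ∀ z ∈ K, ftgrad z z = fgrad z)
    (x : EuclideanSpace ℝ (Fin n)) (hx : x ∈ K)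
    (y : EuclideanSpace ℝ (Fin n))
    (xt : EuclideanSpace ℝ (Fin n)) (hxt : xt ∈ K)
    (hmin : ∀ w ∈ K,
      ft xt x + ⟪y - fgrad x, xt - x⟫ + G xt ≤
        ft w x + ⟪y - fgrad x, w - x⟫ + G w) :
    μ * ‖xt - x‖ ^ 2 ≤ -⟪xt - x, y⟫ + G x - G xt := by
  set u : EuclideanSpace ℝ (Fin n) := y - fgrad x with hu
  -- Step B: gradient lower bound at x for ft · x
  have hB : ft x x + ⟪fgrad x, xt - x⟫ + μ / 2 * ‖xt - x‖ ^ 2 ≤ ft xt x := by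
    have hg0 : HasGradientAt (fun w => ft w x) (fgrad x) x := by
      have h := hftgrad x hx x
      rwa [hconsistent x hx] at h
    have := strong_grad_lb (hstrong x hx) hx hxt hg0
    simpa using this
  -- Step A': for every t ∈ (0,1), a gap inequality from minimality
  have hA : ∀ t ∈ Set.Ioo (0:ℝ) 1,
      μ / 2 * (1 - t) * ‖xt - x‖ ^ 2 ≤
        (ft x x + G x) - (ft xt x + ⟪u, xt - x⟫ + G xt) := by
    intro t ⟨ht0, ht1⟩
    set w : EuclideanSpace ℝ (Fin n) := (1 - t) • xt + t • x with hw
    have hwK : w ∈ K := hKconv hxt hx (by linarith) ht0.le (by ring)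
    have h1 := hmin w hwK
    have hft : ft w x ≤ (1 - t) * ft xt x + t * ft x x
        - (1 - t) * t * (μ / 2 * ‖xt - x‖ ^ 2) := by
      have := (hstrong x hx).2 hxt hx (by linarith : (0:ℝ) ≤ 1 - t) ht0.le (by ring)
      simpa [smul_eq_mul] using this
    have hGw : G w ≤ (1 - t) * G xt + t * G x := by
      have := hG.2 hxt hx (by linarith : (0:ℝ) ≤ 1 - t) ht0.le (by ring)
      simpa [smul_eq_mul] using this
    have hinner : ⟪u, w - x⟫ = (1 - t) * ⟪u, xt - x⟫ := by
      have : w - x = (1 - t) • (xt - x) := by rw [hw]; module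
      rw [this, real_inner_smul_right]
    rw [hinner] at h1
    nlinarith [h1, hft, hGw]
  -- take the limit t → 0⁺
  have hA0 : μ / 2 * ‖xt - x‖ ^ 2 ≤
      (ft x x + G x) - (ft xt x + ⟪u, xt - x⟫ + G xt) := by
    have hL : Filter.Tendsto (fun t : ℝ => μ / 2 * (1 - t) * ‖xt - x‖ ^ 2)
        (𝓝[>] (0:ℝ)) (𝓝 (μ / 2 * ‖xt - x‖ ^ 2)) := by
      have : ContinuousAt (fun t : ℝ => μ / 2 * (1 - t) * ‖xt - x‖ ^ 2) 0 := by fun_prop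
      simpa using this.continuousWithinAt.tendsto
    refine le_of_tendsto hL ?_
    filter_upwards [Ioo_mem_nhdsGT_of_mem (by norm_num : (0:ℝ) ∈ Set.Ico 0 1)] with t ht
    exact hA t ht
  have hsplit : ⟪u, xt - x⟫ = ⟪y, xt - x⟫ - ⟪fgrad x, xt - x⟫ := by
    rw [hu, inner_sub_left]
  have hcomm : ⟪xt - x, y⟫ = ⟪y, xt - x⟫ := real_inner_comm _ _
  rw [hsplit] at hA0
  linarith
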